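/- Let n ≥ 2 be an integer and let ν be a positive Borel measure on ℝ with ∫ |y|^n ν(dy) < ∞. If (ν̄_k)_{k≥1} is a sequence of finite positive measures on ℝ, each with ∫ |y|^n ν̄_k(dy) < ∞, converging weakly to a finite positive measure ν̄, then J(ν̄) ≤ liminf_{k→∞} J(ν̄_k), where J(μ) := ∫_ℝ |y|^n |ν − μ|(dy). That is, the functional J is lower semicontinuous with respect to weak convergence of measures. -/

import Mathlib

open MeasureTheory Filter Set
open scoped ENNReal

/-- The total variation measure `|μ - ν| = (μ - μ⊓ν) + (ν - μ⊓ν)` of the difference of two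
positive measures. -/
noncomputable def tvDist (μ ν : Measure ℝ) : Measure ℝ := (μ - μ ⊓ ν) + (ν - μ ⊓ ν)

/-- The functional `J(μ) = ∫ |y|^n |ν - μ|(dy)`. -/
noncomputable def Jfun (n : ℕ) (ν μ : Measure ℝ) : ℝ≥0∞ :=
  ∫⁻ y, ENNReal.ofReal (|y| ^ n) ∂(tvDist ν μ)

/-- Lower semicontinuity of `J` with respect to weak convergence of measures: if the finite
measures `ν̄_k` (with finite `n`-th absolute moments) converge weakly to the finite measure `ν̄`,
then `J(ν̄) ≤ liminf_k J(ν̄_k)`. -/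
lemma aux_integrable {n : ℕ} (ρ : Measure ℝ)
    (hρ : (∫⁻ y, ENNReal.ofReal (|y| ^ n) ∂ρ) < ⊤)
    {f : ℝ → ℝ} (hf : Continuous f) (hle : ∀ y, |f y| ≤ |y| ^ n) :
    Integrable f ρ := by
  refine ⟨hf.aestronglyMeasurable, ?_⟩
  rw [hasFiniteIntegral_iff_norm]
  refine lt_of_le_of_lt (lintegral_mono fun y => ?_) hρ
  rw [Real.norm_eq_abs]
  exact ENNReal.ofReal_le_ofReal (hle y)

lemma aux_sub_add (σ μ : Measure ℝ) [IsFiniteMeasure σ] (h : σ ≤ μ) :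
    (μ - σ) + σ = μ := Measure.sub_add_cancel_of_le h

lemma key1 {n : ℕ} (ν μ : Measure ℝ)
    (hν : (∫⁻ y, ENNReal.ofReal (|y| ^ n) ∂ν) < ⊤) [IsFiniteMeasure μ]
    (hμ : (∫⁻ y, ENNReal.ofReal (|y| ^ n) ∂μ) < ⊤)
    {f : ℝ → ℝ} (hf : Continuous f) (hle : ∀ y, |f y| ≤ |y| ^ n) :
    ENNReal.ofReal ((∫ y, f y ∂ν) - ∫ y, f y ∂μ) ≤ Jfun n ν μ := by
  set σ := ν ⊓ μ with hσdef
  haveI : IsFiniteMeasure σ := isFiniteMeasure_of_le μ inf_le_right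
  have hνeq : (ν - σ) + σ = ν := Measure.sub_add_cancel_of_le inf_le_left
  have hμeq : (μ - σ) + σ = μ := Measure.sub_add_cancel_of_le inf_le_right
  have hintν : Integrable f ν := aux_integrable ν hν hf hle
  have hintμ : Integrable f μ := aux_integrable μ hμ hf hle
  have hiν : Integrable f ((ν - σ) + σ) := by rw [hνeq]; exact hintν
  have hiμ : Integrable f ((μ - σ) + σ) := by rw [hμeq]; exact hintμ
  rw [integrable_add_measure] at hiν hiμ
  have h1 : (∫ y, f y ∂ν) = (∫ y, f y ∂(ν - σ)) + ∫ y, f y ∂σ := by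
    conv_lhs => rw [← hνeq]
    exact integral_add_measure hiν.1 hiν.2
  have h2 : (∫ y, f y ∂μ) = (∫ y, f y ∂(μ - σ)) + ∫ y, f y ∂σ := by
    conv_lhs => rw [← hμeq]
    exact integral_add_measure hiμ.1 hiμ.2
  have hdiff : (∫ y, f y ∂ν) - ∫ y, f y ∂μ
      = (∫ y, f y ∂(ν - σ)) - ∫ y, f y ∂(μ - σ) := by
    rw [h1, h2]; ring
  rw [hdiff]
  have hbound : ∀ (ρ : Measure ℝ), (∫⁻ y, ENNReal.ofReal (|y| ^ n) ∂ρ) < ⊤ →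
      ENNReal.ofReal |∫ y, f y ∂ρ| ≤ ∫⁻ y, ENNReal.ofReal (|y| ^ n) ∂ρ := by
    intro ρ hρ
    rw [← Real.enorm_eq_ofReal_abs]
    refine le_trans (enorm_integral_le_lintegral_enorm _) (lintegral_mono fun y => ?_)
    rw [← ofReal_norm_eq_enorm, Real.norm_eq_abs]
    exact ENNReal.ofReal_le_ofReal (hle y)
  have hα : (∫⁻ y, ENNReal.ofReal (|y| ^ n) ∂(ν - σ)) < ⊤ := by
    refine lt_of_le_of_lt (lintegral_mono' ?_ le_rfl) hν
    conv_rhs => rw [← hνeq]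
    exact Measure.le_add_right le_rfl
  have hβ : (∫⁻ y, ENNReal.ofReal (|y| ^ n) ∂(μ - σ)) < ⊤ := by
    refine lt_of_le_of_lt (lintegral_mono' ?_ le_rfl) hμ
    conv_rhs => rw [← hμeq]
    exact Measure.le_add_right le_rfl
  calc ENNReal.ofReal ((∫ y, f y ∂(ν - σ)) - ∫ y, f y ∂(μ - σ))
      ≤ ENNReal.ofReal (|∫ y, f y ∂(ν - σ)| + |∫ y, f y ∂(μ - σ)|) := by
        refine ENNReal.ofReal_le_ofReal ?_
        have := abs_nonneg (∫ y, f y ∂(ν - σ))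
        have h2 := neg_abs_le (∫ y, f y ∂(μ - σ))
        have h3 := le_abs_self (∫ y, f y ∂(ν - σ))
        linarith
    _ ≤ ENNReal.ofReal |∫ y, f y ∂(ν - σ)| + ENNReal.ofReal |∫ y, f y ∂(μ - σ)| :=
        ENNReal.ofReal_add_le
    _ ≤ (∫⁻ y, ENNReal.ofReal (|y| ^ n) ∂(ν - σ)) + ∫⁻ y, ENNReal.ofReal (|y| ^ n) ∂(μ - σ) := by
        refine add_le_add ?_ ?_
        · exact le_trans (hbound _ hα) (le_refl _)
        · exact le_trans (hbound _ hβ) (le_refl _)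
    _ = Jfun n ν μ := by
        rw [Jfun, tvDist, lintegral_add_measure]


lemma aux_integrable_bounded (ρ : Measure ℝ) [IsFiniteMeasure ρ] {f : ℝ → ℝ} (hf : Continuous f)
    (C : ℝ) (hb : ∀ y, |f y| ≤ C) : Integrable f ρ :=
  Integrable.mono' (integrable_const C) hf.aestronglyMeasurable
    (ae_of_all _ fun y => by simpa [Real.norm_eq_abs] using hb y)

lemma key_lim {n : ℕ} (ν : Measure ℝ)
    (hν : (∫⁻ y, ENNReal.ofReal (|y| ^ n) ∂ν) < ⊤)
    (νbs : ℕ → Measure ℝ) (hfin : ∀ k, IsFiniteMeasure (νbs k))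
    (hmom : ∀ k, (∫⁻ y, ENNReal.ofReal (|y| ^ n) ∂(νbs k)) < ⊤)
    (νb : Measure ℝ)
    (hweak : ∀ f : ℝ → ℝ, Continuous f → (∃ C : ℝ, ∀ x, |f x| ≤ C) →
      Filter.Tendsto (fun k => ∫ y, f y ∂(νbs k)) Filter.atTop (nhds (∫ y, f y ∂νb)))
    {f : ℝ → ℝ} (hf : Continuous f) (hbd : ∃ C : ℝ, ∀ x, |f x| ≤ C)
    (hle : ∀ y, |f y| ≤ |y| ^ n) :
    ENNReal.ofReal ((∫ y, f y ∂ν) - ∫ y, f y ∂νb)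
      ≤ Filter.liminf (fun k => Jfun n ν (νbs k)) Filter.atTop := by
  have ht := hweak f hf hbd
  have ht2 : Tendsto (fun k => ENNReal.ofReal ((∫ y, f y ∂ν) - ∫ y, f y ∂(νbs k))) atTop
      (nhds (ENNReal.ofReal ((∫ y, f y ∂ν) - ∫ y, f y ∂νb))) :=
    (ENNReal.continuous_ofReal.tendsto _).comp (tendsto_const_nhds.sub ht)
  rw [← ht2.liminf_eq]
  refine liminf_le_liminf (Eventually.of_forall fun k => ?_)
  haveI := hfin k
  exact key1 ν (νbs k) hν (hmom k) hf hle

lemma key_port {n : ℕ}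
    (νbs : ℕ → Measure ℝ) (hfin : ∀ k, IsFiniteMeasure (νbs k))
    (νb : Measure ℝ) (hνb : IsFiniteMeasure νb)
    (hweak : ∀ f : ℝ → ℝ, Continuous f → (∃ C : ℝ, ∀ x, |f x| ≤ C) →
      Filter.Tendsto (fun k => ∫ y, f y ∂(νbs k)) Filter.atTop (nhds (∫ y, f y ∂νb))) :
    (∫⁻ y, ENNReal.ofReal (|y| ^ n) ∂νb)
      ≤ Filter.liminf (fun k => ∫⁻ y, ENNReal.ofReal (|y| ^ n) ∂(νbs k)) Filter.atTop := by
  have hgm_cont : ∀ m : ℕ, Continuous (fun y : ℝ => min (|y| ^ n) (m : ℝ)) :=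
    fun m => ((continuous_abs.pow n).min continuous_const)
  have hgm_nn : ∀ (m : ℕ) (y : ℝ), 0 ≤ min (|y| ^ n) (m : ℝ) :=
    fun m y => le_min (by positivity) (by positivity)
  have heq : ∀ (ρ : Measure ℝ), IsFiniteMeasure ρ → ∀ m : ℕ,
      ENNReal.ofReal (∫ y, min (|y| ^ n) (m : ℝ) ∂ρ)
        = ∫⁻ y, ENNReal.ofReal (min (|y| ^ n) (m : ℝ)) ∂ρ := by
    intro ρ hρ m
    haveI := hρ
    refine ofReal_integral_eq_lintegral_ofReal ?_ (ae_of_all _ (hgm_nn m))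
    refine aux_integrable_bounded ρ (hgm_cont m) m fun y => ?_
    rw [abs_of_nonneg (hgm_nn m y)]
    exact min_le_right _ _
  have key : ∀ m : ℕ, (∫⁻ y, ENNReal.ofReal (min (|y| ^ n) (m : ℝ)) ∂νb)
      ≤ Filter.liminf (fun k => ∫⁻ y, ENNReal.ofReal (|y| ^ n) ∂(νbs k)) Filter.atTop := by
    intro m
    have hbd : ∃ C : ℝ, ∀ x : ℝ, |min (|x| ^ n) (m : ℝ)| ≤ C :=
      ⟨m, fun x => by rw [abs_of_nonneg (hgm_nn m x)]; exact min_le_right _ _⟩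
    have ht := hweak _ (hgm_cont m) hbd
    have ht2 : Tendsto (fun k => ∫⁻ y, ENNReal.ofReal (min (|y| ^ n) (m : ℝ)) ∂(νbs k)) atTop
        (nhds (∫⁻ y, ENNReal.ofReal (min (|y| ^ n) (m : ℝ)) ∂νb)) := by
      rw [← heq νb hνb m]
      have := (ENNReal.continuous_ofReal.tendsto _).comp ht
      refine this.congr fun k => ?_
      exact heq (νbs k) (hfin k) m
    rw [← ht2.liminf_eq]
    refine liminf_le_liminf (Eventually.of_forall fun k => ?_)
    exact lintegral_mono fun y => ENNReal.ofReal_le_ofReal (min_le_left _ _)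
  have hsup : (∫⁻ y, ENNReal.ofReal (|y| ^ n) ∂νb)
      = ⨆ m : ℕ, ∫⁻ y, ENNReal.ofReal (min (|y| ^ n) (m : ℝ)) ∂νb := by
    rw [← lintegral_iSup]
    · refine lintegral_congr fun y => ?_
      refine le_antisymm ?_ (iSup_le fun m => ENNReal.ofReal_le_ofReal (min_le_left _ _))
      refine le_iSup_of_le ⌈|y| ^ n⌉₊ ?_
      rw [min_eq_left (Nat.le_ceil _)]
    · exact fun m => ((hgm_cont m).measurable).ennreal_ofReal
    · intro a b hab y
      exact ENNReal.ofReal_le_ofReal (min_le_min le_rfl (by exact_mod_cast hab))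
  rw [hsup]
  exact iSup_le key

lemma aux_liminf_top {u v : ℕ → ℝ≥0∞} {C : ℝ≥0∞} (hC : C ≠ ⊤) (h : ∀ k, u k ≤ v k + C)
    (htop : Filter.liminf u Filter.atTop = ⊤) : Filter.liminf v Filter.atTop = ⊤ := by
  by_contra hne
  set L := Filter.liminf v Filter.atTop with hL
  have hLtop : L ≠ ⊤ := hne
  have hfreq : ∃ᶠ k in atTop, v k < L + 1 :=
    frequently_lt_of_liminf_lt (by isBoundedDefault) (ENNReal.lt_add_right hLtop one_ne_zero)
  have hev : ∀ᶠ k in atTop, L + 1 + C < u k := by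
    refine eventually_lt_of_lt_liminf ?_ (by isBoundedDefault)
    rw [htop]
    exact ENNReal.add_lt_top.2 ⟨ENNReal.add_lt_top.2 ⟨hLtop.lt_top, ENNReal.one_lt_top⟩, hC.lt_top⟩
  obtain ⟨k, hk1, hk2⟩ := (hev.and_frequently hfreq).exists
  have : L + 1 + C < v k + C := lt_of_lt_of_le hk1 (h k)
  rw [ENNReal.add_lt_add_iff_right hC] at this
  exact absurd hk2 (not_lt.2 this.le)

lemma aux_sup {n : ℕ} (ρ : Measure ℝ) :
    (⨆ m : ℕ, ∫⁻ y, ENNReal.ofReal (min (|y| ^ n) (m : ℝ)) ∂ρ)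
      = ∫⁻ y, ENNReal.ofReal (|y| ^ n) ∂ρ := by
  rw [← lintegral_iSup]
  · refine lintegral_congr fun y => ?_
    refine le_antisymm (iSup_le fun m => ENNReal.ofReal_le_ofReal (min_le_left _ _)) ?_
    refine le_iSup_of_le ⌈|y| ^ n⌉₊ ?_
    rw [min_eq_left (Nat.le_ceil _)]
  · exact fun m => (((continuous_abs.pow n).min continuous_const).measurable).ennreal_ofReal
  · intro a b hab y
    exact ENNReal.ofReal_le_ofReal (min_le_min le_rfl (by exact_mod_cast hab))

lemma key2 {n : ℕ} (ν νb : Measure ℝ) [IsFiniteMeasure νb]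
    (hν : (∫⁻ y, ENNReal.ofReal (|y| ^ n) ∂ν) < ⊤)
    (hMb : (∫⁻ y, ENNReal.ofReal (|y| ^ n) ∂νb) < ⊤) {δ : ℝ} (hδ : 0 < δ) :
    ∃ f : ℝ → ℝ, Continuous f ∧ (∃ C : ℝ, ∀ x, |f x| ≤ C) ∧ (∀ y, |f y| ≤ |y| ^ n) ∧
      Jfun n ν νb ≤ ENNReal.ofReal ((∫ y, f y ∂ν) - ∫ y, f y ∂νb) + ENNReal.ofReal (5 * δ) := by
  set σ := ν ⊓ νb with hσdef
  haveI : IsFiniteMeasure σ := isFiniteMeasure_of_le νb inf_le_right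
  set α := ν - σ with hαdef
  set β := νb - σ with hβdef
  have hνeq : α + σ = ν := Measure.sub_add_cancel_of_le inf_le_left
  have hβeq : β + σ = νb := Measure.sub_add_cancel_of_le inf_le_right
  have hαle : α ≤ ν := by rw [← hνeq]; exact Measure.le_add_right le_rfl
  have hβle : β ≤ νb := by rw [← hβeq]; exact Measure.le_add_right le_rfl
  have hGα : (∫⁻ y, ENNReal.ofReal (|y| ^ n) ∂α) < ⊤ :=
    lt_of_le_of_lt (lintegral_mono' hαle le_rfl) hν
  have hGβ : (∫⁻ y, ENNReal.ofReal (|y| ^ n) ∂β) < ⊤ :=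
    lt_of_le_of_lt (lintegral_mono' hβle le_rfl) hMb
  have hdisj : Disjoint α β := by
    intro d hdα hdβ
    have h1 : σ + d ≤ ν := by
      calc σ + d ≤ σ + α := add_le_add_right hdα σ
        _ = ν := by rw [add_comm]; exact hνeq
    have h2 : σ + d ≤ νb := by
      calc σ + d ≤ σ + β := add_le_add_right hdβ σ
        _ = νb := by rw [add_comm]; exact hβeq
    have h3 : σ + d ≤ σ + 0 := by simpa [hσdef] using le_inf h1 h2
    have h4 : d ≤ 0 := Measure.le_of_add_le_add_left h3
    have hbot : (⊥ : Measure ℝ) = 0 := rfl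
    rw [hbot]
    exact h4
  obtain ⟨A, hAm, hαA, hβAc⟩ := Measure.mutuallySingular_of_disjoint hdisj
  set ρ := α + β with hρdef
  have hJ : Jfun n ν νb = ∫⁻ y, ENNReal.ofReal (|y| ^ n) ∂ρ := rfl
  have hρsplit : (∫⁻ y, ENNReal.ofReal (|y| ^ n) ∂ρ)
      = (∫⁻ y, ENNReal.ofReal (|y| ^ n) ∂α) + ∫⁻ y, ENNReal.ofReal (|y| ^ n) ∂β :=
    lintegral_add_measure _ _ _
  have hS : (∫⁻ y, ENNReal.ofReal (|y| ^ n) ∂ρ) < ⊤ := by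
    rw [hρsplit]; exact ENNReal.add_lt_top.2 ⟨hGα, hGβ⟩
  have hδ0 : ENNReal.ofReal δ ≠ 0 := by
    simp only [ne_eq, ENNReal.ofReal_eq_zero, not_le]; exact hδ
  -- choose the truncation level m
  obtain ⟨m, hm⟩ : ∃ m : ℕ, (∫⁻ y, ENNReal.ofReal (|y| ^ n) ∂ρ)
      ≤ (∫⁻ y, ENNReal.ofReal (min (|y| ^ n) (m : ℝ)) ∂ρ) + ENNReal.ofReal δ := by
    by_cases hsmall : (∫⁻ y, ENNReal.ofReal (|y| ^ n) ∂ρ) ≤ ENNReal.ofReal δ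
    · exact ⟨0, hsmall.trans le_add_self⟩
    · have hpos : (∫⁻ y, ENNReal.ofReal (|y| ^ n) ∂ρ) ≠ 0 := by
        intro h0; rw [h0] at hsmall; exact hsmall (zero_le)
      have h1 : (∫⁻ y, ENNReal.ofReal (|y| ^ n) ∂ρ) - ENNReal.ofReal δ
          < ⨆ m : ℕ, ∫⁻ y, ENNReal.ofReal (min (|y| ^ n) (m : ℝ)) ∂ρ := by
        rw [aux_sup (n := n) ρ]
        exact ENNReal.sub_lt_self hS.ne hpos hδ0
      obtain ⟨m, hm⟩ := lt_iSup_iff.1 h1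
      refine ⟨m, ?_⟩
      have h2 : ENNReal.ofReal δ ≤ ∫⁻ y, ENNReal.ofReal (|y| ^ n) ∂ρ :=
        (not_le.1 hsmall).le
      calc (∫⁻ y, ENNReal.ofReal (|y| ^ n) ∂ρ)
          = ((∫⁻ y, ENNReal.ofReal (|y| ^ n) ∂ρ) - ENNReal.ofReal δ) + ENNReal.ofReal δ :=
            (tsub_add_cancel_of_le h2).symm
        _ ≤ (∫⁻ y, ENNReal.ofReal (min (|y| ^ n) (m : ℝ)) ∂ρ) + ENNReal.ofReal δ :=
            add_le_add hm.le le_rfl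
  -- the truncated weight
  set gm := fun y : ℝ => min (|y| ^ n) (m : ℝ) with hgmdef
  have hgm_cont : Continuous gm := (continuous_abs.pow n).min continuous_const
  have hgm_nn : ∀ y, 0 ≤ gm y := fun y => le_min (by positivity) (by positivity)
  have hgm_le : ∀ y, |gm y| ≤ |y| ^ n := fun y => by
    rw [abs_of_nonneg (hgm_nn y)]; exact min_le_left _ _
  have hgm_bd : ∀ y, |gm y| ≤ (m : ℝ) := fun y => by
    rw [abs_of_nonneg (hgm_nn y)]; exact min_le_right _ _
  -- the weighted measure used for regularity
  set γ := ρ.withDensity (fun y => ENNReal.ofReal (gm y)) with hγdef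
  have hγ_apply : ∀ s : Set ℝ, MeasurableSet s →
      γ s = ∫⁻ y in s, ENNReal.ofReal (gm y) ∂ρ := fun s hs => withDensity_apply _ hs
  haveI : IsFiniteMeasure γ := by
    constructor
    rw [hγ_apply univ MeasurableSet.univ, Measure.restrict_univ]
    refine lt_of_le_of_lt (lintegral_mono fun y => ?_) hS
    exact ENNReal.ofReal_le_ofReal (min_le_left _ _)
  -- compact inner approximation of Aᶜ and open outer approximation
  obtain ⟨K, hKA, hKcomp, hKlt⟩ :=
    hAm.compl.exists_isCompact_diff_lt (measure_ne_top γ _) hδ0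
  obtain ⟨U, hUA, hUopen, -, hUlt⟩ :=
    hAm.compl.exists_isOpen_diff_lt (measure_ne_top γ _) hδ0
  obtain ⟨φ, hφ0, hφ1, hφ01⟩ :=
    exists_continuous_zero_one_of_isClosed hUopen.isClosed_compl hKcomp.isClosed
      (Set.disjoint_left.2 fun x hxU hxK => hxU (hUA (hKA hxK)))
  set f := fun y : ℝ => gm y * (2 * φ y - 1) with hfdef
  have hφb : ∀ y, |2 * φ y - 1| ≤ 1 := fun y =>
    abs_le.2 ⟨by linarith [(hφ01 y).1], by linarith [(hφ01 y).2]⟩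
  have hfc : Continuous f :=
    hgm_cont.mul ((continuous_const.mul φ.continuous).sub continuous_const)
  have hfle : ∀ y, |f y| ≤ |y| ^ n := fun y => by
    rw [hfdef, abs_mul]
    calc |gm y| * |2 * φ y - 1| ≤ |gm y| * 1 :=
          mul_le_mul_of_nonneg_left (hφb y) (abs_nonneg _)
      _ = |gm y| := mul_one _
      _ ≤ |y| ^ n := hgm_le y
  have hfbd : ∀ y, |f y| ≤ (m : ℝ) := fun y => by
    rw [hfdef, abs_mul]
    calc |gm y| * |2 * φ y - 1| ≤ |gm y| * 1 :=
          mul_le_mul_of_nonneg_left (hφb y) (abs_nonneg _)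
      _ = |gm y| := mul_one _
      _ ≤ (m : ℝ) := hgm_bd y
  -- integrability
  have hint_gm_α : Integrable gm α := aux_integrable α hGα hgm_cont hgm_le
  have hint_gm_β : Integrable gm β := aux_integrable β hGβ hgm_cont hgm_le
  have hint_f_α : Integrable f α := aux_integrable α hGα hfc hfle
  have hint_f_β : Integrable f β := aux_integrable β hGβ hfc hfle
  have haux1 : ∀ y, |gm y * (1 - φ y)| ≤ |y| ^ n := fun y => by
    rw [abs_mul]
    calc |gm y| * |1 - φ y| ≤ |gm y| * 1 := by
          refine mul_le_mul_of_nonneg_left ?_ (abs_nonneg _)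
          exact abs_le.2 ⟨by linarith [(hφ01 y).2], by linarith [(hφ01 y).1]⟩
      _ ≤ |y| ^ n := by rw [mul_one]; exact hgm_le y
  have haux2 : ∀ y, |gm y * φ y| ≤ |y| ^ n := fun y => by
    rw [abs_mul]
    calc |gm y| * |φ y| ≤ |gm y| * 1 := by
          refine mul_le_mul_of_nonneg_left ?_ (abs_nonneg _)
          exact abs_le.2 ⟨by linarith [(hφ01 y).1], (hφ01 y).2⟩
      _ ≤ |y| ^ n := by rw [mul_one]; exact hgm_le y
  have hint1 : Integrable (fun y => gm y * (1 - φ y)) α :=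
    aux_integrable α hGα (hgm_cont.mul (continuous_const.sub φ.continuous)) haux1
  have hint2 : Integrable (fun y => gm y * φ y) β :=
    aux_integrable β hGβ (hgm_cont.mul φ.continuous) haux2
  -- Claim A : the error term on the α side is at most δ
  have claimA : (∫ y, gm y * (1 - φ y) ∂α) ≤ δ := by
    have hnn : ∀ y, 0 ≤ gm y * (1 - φ y) := fun y =>
      mul_nonneg (hgm_nn y) (by linarith [(hφ01 y).2])
    have hae : ∀ᵐ y ∂α, y ∉ A := by
      rw [ae_iff]
      simpa using hαA
    have hlin : (∫⁻ y, ENNReal.ofReal (gm y * (1 - φ y)) ∂α) ≤ ENNReal.ofReal δ := by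
      have hKm : MeasurableSet (Aᶜ \ K) := hAm.compl.diff hKcomp.isClosed.measurableSet
      have hbd : ∀ᵐ y ∂α, ENNReal.ofReal (gm y * (1 - φ y))
          ≤ (Aᶜ \ K).indicator (fun y => ENNReal.ofReal (gm y)) y := by
        refine hae.mono fun y hy => ?_
        by_cases hyK : y ∈ K
        · have h1 : φ y = 1 := hφ1 hyK
          simp [h1]
        · rw [Set.indicator_of_mem (Set.mem_diff y |>.2 ⟨hy, hyK⟩)]
          refine ENNReal.ofReal_le_ofReal ?_
          exact mul_le_of_le_one_right (hgm_nn y) (by linarith [(hφ01 y).1])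
      calc (∫⁻ y, ENNReal.ofReal (gm y * (1 - φ y)) ∂α)
          ≤ ∫⁻ y, (Aᶜ \ K).indicator (fun y => ENNReal.ofReal (gm y)) y ∂α :=
            lintegral_mono_ae hbd
        _ = ∫⁻ y in Aᶜ \ K, ENNReal.ofReal (gm y) ∂α := lintegral_indicator hKm _
        _ ≤ ∫⁻ y in Aᶜ \ K, ENNReal.ofReal (gm y) ∂ρ :=
            lintegral_mono' (Measure.restrict_mono subset_rfl (Measure.le_add_right le_rfl)) le_rfl
        _ = γ (Aᶜ \ K) := (hγ_apply _ hKm).symm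
        _ ≤ ENNReal.ofReal δ := hKlt.le
    calc (∫ y, gm y * (1 - φ y) ∂α)
        = (∫⁻ y, ENNReal.ofReal (gm y * (1 - φ y)) ∂α).toReal := by
          rw [integral_eq_lintegral_of_nonneg_ae (ae_of_all _ hnn)
            (hgm_cont.mul (continuous_const.sub φ.continuous)).aestronglyMeasurable]
      _ ≤ (ENNReal.ofReal δ).toReal := ENNReal.toReal_mono ENNReal.ofReal_ne_top hlin
      _ = δ := ENNReal.toReal_ofReal hδ.le
  -- Claim B : the error term on the β side is at most δ
  have claimB : (∫ y, gm y * φ y ∂β) ≤ δ := by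
    have hnn : ∀ y, 0 ≤ gm y * φ y := fun y => mul_nonneg (hgm_nn y) (hφ01 y).1
    have hae : ∀ᵐ y ∂β, y ∈ A := by
      rw [ae_iff]
      simpa [← Set.compl_def] using hβAc
    have hlin : (∫⁻ y, ENNReal.ofReal (gm y * φ y) ∂β) ≤ ENNReal.ofReal δ := by
      have hAU : MeasurableSet (A ∩ U) := hAm.inter hUopen.measurableSet
      have hbd : ∀ᵐ y ∂β, ENNReal.ofReal (gm y * φ y)
          ≤ (A ∩ U).indicator (fun y => ENNReal.ofReal (gm y)) y := by
        refine hae.mono fun y hy => ?_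
        by_cases hyU : y ∈ U
        · rw [Set.indicator_of_mem (Set.mem_inter hy hyU)]
          refine ENNReal.ofReal_le_ofReal ?_
          exact mul_le_of_le_one_right (hgm_nn y) (hφ01 y).2
        · have h0 : φ y = 0 := hφ0 hyU
          simp [h0]
      calc (∫⁻ y, ENNReal.ofReal (gm y * φ y) ∂β)
          ≤ ∫⁻ y, (A ∩ U).indicator (fun y => ENNReal.ofReal (gm y)) y ∂β :=
            lintegral_mono_ae hbd
        _ = ∫⁻ y in A ∩ U, ENNReal.ofReal (gm y) ∂β := lintegral_indicator hAU _
        _ ≤ ∫⁻ y in A ∩ U, ENNReal.ofReal (gm y) ∂ρ :=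
            lintegral_mono' (Measure.restrict_mono subset_rfl (Measure.le_add_left le_rfl)) le_rfl
        _ = γ (A ∩ U) := (hγ_apply _ hAU).symm
        _ = γ (U \ Aᶜ) := by rw [Set.diff_eq, compl_compl, Set.inter_comm]
        _ ≤ ENNReal.ofReal δ := hUlt.le
    calc (∫ y, gm y * φ y ∂β)
        = (∫⁻ y, ENNReal.ofReal (gm y * φ y) ∂β).toReal := by
          rw [integral_eq_lintegral_of_nonneg_ae (ae_of_all _ hnn)
            (hgm_cont.mul φ.continuous).aestronglyMeasurable]
      _ ≤ (ENNReal.ofReal δ).toReal := ENNReal.toReal_mono ENNReal.ofReal_ne_top hlin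
      _ = δ := ENNReal.toReal_ofReal hδ.le
  -- decompositions of the integral of f
  have hfdec1 : (∫ y, f y ∂α) = (∫ y, gm y ∂α) - 2 * ∫ y, gm y * (1 - φ y) ∂α := by
    have hpt : ∀ y, f y = gm y - 2 * (gm y * (1 - φ y)) := fun y => by rw [hfdef]; ring
    calc (∫ y, f y ∂α) = ∫ y, (gm y - 2 * (gm y * (1 - φ y))) ∂α :=
          integral_congr_ae (ae_of_all _ hpt)
      _ = (∫ y, gm y ∂α) - ∫ y, 2 * (gm y * (1 - φ y)) ∂α :=
          integral_sub hint_gm_α (hint1.const_mul 2)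
      _ = (∫ y, gm y ∂α) - 2 * ∫ y, gm y * (1 - φ y) ∂α := by rw [integral_const_mul]
  have hfdec2 : (∫ y, f y ∂β) = 2 * (∫ y, gm y * φ y ∂β) - ∫ y, gm y ∂β := by
    have hpt : ∀ y, f y = 2 * (gm y * φ y) - gm y := fun y => by rw [hfdef]; ring
    calc (∫ y, f y ∂β) = ∫ y, (2 * (gm y * φ y) - gm y) ∂β :=
          integral_congr_ae (ae_of_all _ hpt)
      _ = (∫ y, 2 * (gm y * φ y) ∂β) - ∫ y, gm y ∂β :=
          integral_sub (hint2.const_mul 2) hint_gm_β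
      _ = 2 * (∫ y, gm y * φ y ∂β) - ∫ y, gm y ∂β := by rw [integral_const_mul]
  -- difference of integrals over ν and νb reduces to α and β
  have hintν : Integrable f ν := aux_integrable ν hν hfc hfle
  have hintνb : Integrable f νb := aux_integrable νb hMb hfc hfle
  have hiν : Integrable f (α + σ) := by rw [hνeq]; exact hintν
  have hiβ : Integrable f (β + σ) := by rw [hβeq]; exact hintνb
  rw [integrable_add_measure] at hiν hiβ
  have h1 : (∫ y, f y ∂ν) = (∫ y, f y ∂α) + ∫ y, f y ∂σ := by
    conv_lhs => rw [← hνeq]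
    exact integral_add_measure hiν.1 hiν.2
  have h2 : (∫ y, f y ∂νb) = (∫ y, f y ∂β) + ∫ y, f y ∂σ := by
    conv_lhs => rw [← hβeq]
    exact integral_add_measure hiβ.1 hiβ.2
  have hdiff : (∫ y, f y ∂ν) - ∫ y, f y ∂νb = (∫ y, f y ∂α) - ∫ y, f y ∂β := by
    rw [h1, h2]; ring
  have hsum : (∫ y, gm y ∂α) + (∫ y, gm y ∂β)
      ≤ ((∫ y, f y ∂ν) - ∫ y, f y ∂νb) + 4 * δ := by
    rw [hdiff, hfdec1, hfdec2]
    linarith [claimA, claimB]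
  have heqα : (∫⁻ y, ENNReal.ofReal (gm y) ∂α) = ENNReal.ofReal (∫ y, gm y ∂α) :=
    (ofReal_integral_eq_lintegral_ofReal hint_gm_α (ae_of_all _ hgm_nn)).symm
  have heqβ : (∫⁻ y, ENNReal.ofReal (gm y) ∂β) = ENNReal.ofReal (∫ y, gm y ∂β) :=
    (ofReal_integral_eq_lintegral_ofReal hint_gm_β (ae_of_all _ hgm_nn)).symm
  refine ⟨f, hfc, ⟨m, hfbd⟩, hfle, ?_⟩
  calc Jfun n ν νb = ∫⁻ y, ENNReal.ofReal (|y| ^ n) ∂ρ := hJ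
    _ ≤ (∫⁻ y, ENNReal.ofReal (gm y) ∂ρ) + ENNReal.ofReal δ := hm
    _ = ((∫⁻ y, ENNReal.ofReal (gm y) ∂α) + ∫⁻ y, ENNReal.ofReal (gm y) ∂β)
        + ENNReal.ofReal δ := by rw [hρdef, lintegral_add_measure]
    _ = ENNReal.ofReal ((∫ y, gm y ∂α) + (∫ y, gm y ∂β)) + ENNReal.ofReal δ := by
        rw [heqα, heqβ, ENNReal.ofReal_add (integral_nonneg hgm_nn) (integral_nonneg hgm_nn)]
    _ ≤ ENNReal.ofReal (((∫ y, f y ∂ν) - ∫ y, f y ∂νb) + 4 * δ) + ENNReal.ofReal δ :=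
        add_le_add (ENNReal.ofReal_le_ofReal hsum) le_rfl
    _ ≤ (ENNReal.ofReal ((∫ y, f y ∂ν) - ∫ y, f y ∂νb) + ENNReal.ofReal (4 * δ))
        + ENNReal.ofReal δ := add_le_add ENNReal.ofReal_add_le le_rfl
    _ = ENNReal.ofReal ((∫ y, f y ∂ν) - ∫ y, f y ∂νb)
        + (ENNReal.ofReal (4 * δ) + ENNReal.ofReal δ) := by rw [add_assoc]
    _ = ENNReal.ofReal ((∫ y, f y ∂ν) - ∫ y, f y ∂νb) + ENNReal.ofReal (5 * δ) := by
        have : ENNReal.ofReal (4 * δ) + ENNReal.ofReal δ = ENNReal.ofReal (5 * δ) := by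
          rw [← ENNReal.ofReal_add (by positivity) hδ.le]
          congr 1
          ring
        rw [this]


theorem stmt_5 (n : ℕ) (hn : 2 ≤ n) (ν : Measure ℝ)
    (hν : (∫⁻ y, ENNReal.ofReal (|y| ^ n) ∂ν) < ⊤)
    (νbs : ℕ → Measure ℝ) (hfin : ∀ k, IsFiniteMeasure (νbs k))
    (hmom : ∀ k, (∫⁻ y, ENNReal.ofReal (|y| ^ n) ∂(νbs k)) < ⊤)
    (νb : Measure ℝ) (hνb : IsFiniteMeasure νb)
    (hweak : ∀ f : ℝ → ℝ, Continuous f → (∃ C : ℝ, ∀ x, |f x| ≤ C) →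
      Filter.Tendsto (fun k => ∫ y, f y ∂(νbs k)) Filter.atTop (nhds (∫ y, f y ∂νb))) :
    Jfun n ν νb ≤ Filter.liminf (fun k => Jfun n ν (νbs k)) Filter.atTop := by
  haveI := hνb
  by_cases hMb : (∫⁻ y, ENNReal.ofReal (|y| ^ n) ∂νb) = ⊤
  · -- infinite moment of the limit : the liminf is infinite
    have hport := key_port (n := n) νbs hfin νb hνb hweak
    have htop : Filter.liminf (fun k => ∫⁻ y, ENNReal.ofReal (|y| ^ n) ∂(νbs k))
        Filter.atTop = ⊤ := top_le_iff.1 (hMb ▸ hport)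
    have hub : ∀ k, (∫⁻ y, ENNReal.ofReal (|y| ^ n) ∂(νbs k))
        ≤ Jfun n ν (νbs k) + ∫⁻ y, ENNReal.ofReal (|y| ^ n) ∂ν := by
      intro k
      haveI := hfin k
      set σ := ν ⊓ νbs k with hσdef
      haveI : IsFiniteMeasure σ := isFiniteMeasure_of_le (νbs k) inf_le_right
      have hkeq : (νbs k - σ) + σ = νbs k := Measure.sub_add_cancel_of_le inf_le_right
      calc (∫⁻ y, ENNReal.ofReal (|y| ^ n) ∂(νbs k))
          = (∫⁻ y, ENNReal.ofReal (|y| ^ n) ∂(νbs k - σ))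
            + ∫⁻ y, ENNReal.ofReal (|y| ^ n) ∂σ := by
            conv_lhs => rw [← hkeq]
            exact lintegral_add_measure _ _ _
        _ ≤ Jfun n ν (νbs k) + ∫⁻ y, ENNReal.ofReal (|y| ^ n) ∂ν := by
            refine add_le_add ?_ (lintegral_mono' inf_le_left le_rfl)
            rw [Jfun, tvDist, lintegral_add_measure]
            exact le_add_self
    have := aux_liminf_top (C := ∫⁻ y, ENNReal.ofReal (|y| ^ n) ∂ν) hν.ne hub htop
    rw [this]
    exact le_top
  · -- finite moment of the limit
    have hMb' : (∫⁻ y, ENNReal.ofReal (|y| ^ n) ∂νb) < ⊤ := lt_top_iff_ne_top.2 hMb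
    refine ENNReal.le_of_forall_pos_le_add fun ε hε _ => ?_
    have hδ : (0 : ℝ) < (ε : ℝ) / 5 := by positivity
    obtain ⟨f, hfc, hfbd, hfle, hkey⟩ := key2 (n := n) ν νb hν hMb' hδ
    have hlim := key_lim (n := n) ν hν νbs hfin hmom νb hweak hfc hfbd hfle
    calc Jfun n ν νb
        ≤ ENNReal.ofReal ((∫ y, f y ∂ν) - ∫ y, f y ∂νb)
          + ENNReal.ofReal (5 * ((ε : ℝ) / 5)) := hkey
      _ ≤ Filter.liminf (fun k => Jfun n ν (νbs k)) Filter.atTop + ε := by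
          refine add_le_add hlim ?_
          have : (5 : ℝ) * ((ε : ℝ) / 5) = (ε : ℝ) := by ring
          rw [this, ENNReal.ofReal_coe_nnreal]
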